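/- Let G be a graph with vertex set {v₁, …, vₙ}, let ℓ ≤ n(n−1)/2 be a positive integer, and set k = n(n−1)/2 − ℓ. Define the distance space (X, ρ) with X = {p₀, …, p_k} ∪ {x₁, …, xₙ} (all k + 1 + n points distinct) by: ρ(pᵢ, pⱼ) = 0 for all i, j ∈ {0,…,k}; ρ(pᵢ, xⱼ) = 1 for all i ∈ {0,…,k} and j ∈ {1,…,n}; and for distinct i, j ∈ {1,…,n}, ρ(xᵢ, xⱼ) = 2 if vᵢvⱼ is an edge of G and ρ(xᵢ, xⱼ) = 1 otherwise. Then G has a cut of size at least ℓ if and only if there exists a distance function ρ' on X that differs from ρ on at most k unordered pairs of distinct points of X such that (X, ρ') is 1-embeddable. -/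

import Mathlib

/-- `(X, ρ)` is a distance space: `ρ` is symmetric, nonnegative and vanishes on the
diagonal on the points of `X`. -/
def IsDistance {α : Type*} (X : Finset α) (ρ : α → α → ℝ) : Prop :=
  (∀ x ∈ X, ∀ y ∈ X, ρ x y = ρ y x) ∧ (∀ x ∈ X, ∀ y ∈ X, 0 ≤ ρ x y) ∧ (∀ x ∈ X, ρ x x = 0)

/-- `(X, ρ)` is isometrically embeddable into `ℝ^d`. -/
def IsEmbeddable {α : Type*} (X : Finset α) (ρ : α → α → ℝ) (d : ℕ) : Prop :=
  ∃ φ : α → EuclideanSpace ℝ (Fin d), ∀ x ∈ X, ∀ y ∈ X, ρ x y = dist (φ x) (φ y)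

/-- `(X, ρ)` is strongly `d`-embeddable: `d`-embeddable but (for `d ≥ 1`)
not `(d-1)`-embeddable. -/
def IsStronglyEmbeddable {α : Type*} (X : Finset α) (ρ : α → α → ℝ) (d : ℕ) : Prop :=
  IsEmbeddable X ρ d ∧ (0 < d → ¬ IsEmbeddable X ρ (d - 1))

/-- A nonempty set `Y` with `|Y| = r + 1` is independent if `(Y, ρ)` is strongly
`r`-embeddable. -/
def IsIndependent {α : Type*} (Y : Finset α) (ρ : α → α → ℝ) : Prop :=
  Y.Nonempty ∧ IsStronglyEmbeddable Y ρ (Y.card - 1)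

/-- The distance space of the max-cut reduction: points `p₀, …, p_k` (modelled as
`Sum.inl a` for `a : Fin (k+1)`) and `x₁, …, xₙ` (modelled as `Sum.inr b` for
`b : Fin n`). -/
def rhoMC {n : ℕ} (k : ℕ) (G : SimpleGraph (Fin n)) [DecidableRel G.Adj] :
    (Fin (k + 1) ⊕ Fin n) → (Fin (k + 1) ⊕ Fin n) → ℝ
  | Sum.inl _, Sum.inl _ => 0
  | Sum.inl _, Sum.inr _ => 1
  | Sum.inr _, Sum.inl _ => 1
  | Sum.inr a, Sum.inr b => if a = b then 0 else if G.Adj a b then 2 else 1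


open Finset

lemma ncard_filter' {β : Type*} [Fintype β] (P : β → Prop) [DecidablePred P] :
    {x | P x}.ncard = (Finset.univ.filter P).card := by
  rw [Set.ncard_eq_toFinset_card']
  simp [Set.toFinset_setOf]

lemma dist_euclid_one (x y : EuclideanSpace ℝ (Fin 1)) : dist x y = |x 0 - y 0| := by
  rw [EuclideanSpace.dist_eq]
  simp [Fin.sum_univ_one, Real.dist_eq, sq_abs, Real.sqrt_sq_eq_abs]

lemma count_lemma (n : ℕ) (G : SimpleGraph (Fin n)) [DecidableRel G.Adj] (A : Finset (Fin n)) :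
    (univ.filter (fun p : Fin n × Fin n => p.1 ≠ p.2 ∧
        ¬(G.Adj p.1 p.2 ∧ ((p.1 ∈ A ∧ p.2 ∉ A) ∨ (p.2 ∈ A ∧ p.1 ∉ A))))).card
      + 2 * (univ.filter (fun p : Fin n × Fin n => G.Adj p.1 p.2 ∧ p.1 ∈ A ∧ p.2 ∉ A)).card
      = n * n - n := by
  classical
  have hsplit := Finset.card_filter_add_card_filter_not
    (s := (univ : Finset (Fin n × Fin n)).filter (fun p => p.1 ≠ p.2))
    (p := fun p => G.Adj p.1 p.2 ∧ ((p.1 ∈ A ∧ p.2 ∉ A) ∨ (p.2 ∈ A ∧ p.1 ∉ A)))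
  rw [Finset.filter_filter, Finset.filter_filter] at hsplit
  have hoff : (univ.filter (fun p : Fin n × Fin n => p.1 ≠ p.2)).card = n*n - n := by
    rw [show (univ.filter (fun p : Fin n × Fin n => p.1 ≠ p.2)) = (univ : Finset (Fin n)).offDiag
      from by ext p; simp [Finset.mem_offDiag], Finset.offDiag_card]
    simp
  have hstep1 : (univ.filter (fun p : Fin n × Fin n => p.1 ≠ p.2 ∧
        (G.Adj p.1 p.2 ∧ ((p.1 ∈ A ∧ p.2 ∉ A) ∨ (p.2 ∈ A ∧ p.1 ∉ A)))))
      = (univ.filter (fun p : Fin n × Fin n => G.Adj p.1 p.2 ∧ p.1 ∈ A ∧ p.2 ∉ A))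
        ∪ (univ.filter (fun p : Fin n × Fin n => G.Adj p.1 p.2 ∧ p.2 ∈ A ∧ p.1 ∉ A)) := by
    ext p
    simp only [mem_filter, mem_univ, true_and, Finset.mem_union]
    constructor
    · rintro ⟨-, hadj, h | h⟩
      · exact Or.inl ⟨hadj, h⟩
      · exact Or.inr ⟨hadj, h⟩
    · rintro (⟨hadj, h⟩ | ⟨hadj, h⟩)
      · exact ⟨hadj.ne, hadj, Or.inl h⟩
      · exact ⟨hadj.ne, hadj, Or.inr h⟩
  have hdisj : Disjoint
      (univ.filter (fun p : Fin n × Fin n => G.Adj p.1 p.2 ∧ p.1 ∈ A ∧ p.2 ∉ A))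
      (univ.filter (fun p : Fin n × Fin n => G.Adj p.1 p.2 ∧ p.2 ∈ A ∧ p.1 ∉ A)) := by
    rw [Finset.disjoint_left]
    intro p hp hq
    simp only [mem_filter] at hp hq
    exact hq.2.2.2 hp.2.2.1
  have hRF : (univ.filter (fun p : Fin n × Fin n => G.Adj p.1 p.2 ∧ p.2 ∈ A ∧ p.1 ∉ A)).card
      = (univ.filter (fun p : Fin n × Fin n => G.Adj p.1 p.2 ∧ p.1 ∈ A ∧ p.2 ∉ A)).card := by
    apply Finset.card_bij (fun p _ => Prod.swap p)
    · intro p hp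
      simp only [mem_filter, mem_univ, true_and, Prod.fst_swap, Prod.snd_swap] at hp ⊢
      exact ⟨hp.1.symm, hp.2.1, hp.2.2⟩
    · intro p _ q _ h
      exact Prod.swap_injective h
    · intro p hp
      refine ⟨p.swap, ?_, by simp⟩
      simp only [mem_filter, mem_univ, true_and, Prod.fst_swap, Prod.snd_swap] at hp ⊢
      exact ⟨hp.1.symm, hp.2.1, hp.2.2⟩
  rw [hstep1, Finset.card_union_of_disjoint hdisj, hRF, hoff] at hsplit
  omega

theorem fwd (n ℓ k : ℕ) (hℓ1 : 1 ≤ ℓ) (hℓ : ℓ ≤ n * (n - 1) / 2)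
    (hk : k = n * (n - 1) / 2 - ℓ) (G : SimpleGraph (Fin n)) [DecidableRel G.Adj]
    (A : Finset (Fin n))
    (hA : ℓ ≤ {p : Fin n × Fin n | G.Adj p.1 p.2 ∧ p.1 ∈ A ∧ p.2 ∉ A}.ncard) :
      ∃ ρ' : (Fin (k + 1) ⊕ Fin n) → (Fin (k + 1) ⊕ Fin n) → ℝ,
        (∀ x y, ρ' x y = ρ' y x) ∧ (∀ x y, 0 ≤ ρ' x y) ∧ (∀ x, ρ' x x = 0) ∧
        {p : (Fin (k + 1) ⊕ Fin n) × (Fin (k + 1) ⊕ Fin n) |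
            p.1 ≠ p.2 ∧ ρ' p.1 p.2 ≠ rhoMC k G p.1 p.2}.ncard ≤ 2 * k ∧
        IsEmbeddable Finset.univ ρ' 1 := by
  classical
  set val : (Fin (k+1) ⊕ Fin n) → ℝ :=
    Sum.elim (fun _ => (0:ℝ)) (fun j => if j ∈ A then (1:ℝ) else -1) with hvaldef
  refine ⟨fun x y => |val x - val y|, fun x y => abs_sub_comm _ _, fun x y => abs_nonneg _,
    fun x => by simp, ?_, ⟨fun x => WithLp.toLp 2 (fun _ => val x), fun x _ y _ => by rw [dist_euclid_one]⟩⟩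
  rw [ncard_filter']
  beta_reduce
  have hsub : univ.filter (fun p : (Fin (k+1) ⊕ Fin n) × (Fin (k+1) ⊕ Fin n) =>
        p.1 ≠ p.2 ∧ |val p.1 - val p.2| ≠ rhoMC k G p.1 p.2)
      ⊆ (univ.filter (fun p : Fin n × Fin n => p.1 ≠ p.2 ∧
          ¬(G.Adj p.1 p.2 ∧ ((p.1 ∈ A ∧ p.2 ∉ A) ∨ (p.2 ∈ A ∧ p.1 ∉ A))))).map
        ⟨fun p => (Sum.inr p.1, Sum.inr p.2), by
          intro p q h
          simpa [Prod.ext_iff] using h⟩ := by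
    intro p hp
    simp only [mem_filter, mem_univ, true_and] at hp
    obtain ⟨x, y⟩ := p
    obtain ⟨hne, hchg⟩ := hp
    rcases x with a | i <;> rcases y with b | j
    · exact absurd (by simp [rhoMC, hvaldef]) hchg
    · exfalso; apply hchg
      by_cases hj : j ∈ A <;> simp [rhoMC, hvaldef, hj] <;> norm_num
    · exfalso; apply hchg
      by_cases hi : i ∈ A <;> simp [rhoMC, hvaldef, hi] <;> norm_num
    · have hij : i ≠ j := fun h => hne (by rw [h])
      rw [Finset.mem_map]
      refine ⟨(i, j), ?_, rfl⟩
      simp only [mem_filter, mem_univ, true_and]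
      refine ⟨hij, ?_⟩
      rintro ⟨hadj, hcross⟩
      apply hchg
      rcases hcross with ⟨h1, h2⟩ | ⟨h1, h2⟩ <;>
        simp [rhoMC, hvaldef, hij, hadj, h1, h2] <;> norm_num
  have hcard1 := (Finset.card_le_card hsub).trans_eq (Finset.card_map _)
  have hc := count_lemma n G A
  rw [ncard_filter'] at hA
  have hA' : ℓ ≤ (univ.filter (fun p : Fin n × Fin n =>
      G.Adj p.1 p.2 ∧ p.1 ∈ A ∧ p.2 ∉ A)).card := hA
  have e1 : n * (n-1) = n*n - n := by
    rcases n with _|m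
    · rfl
    · rw [Nat.succ_sub_one, Nat.mul_succ, Nat.add_sub_cancel]
  have hev : Even (n * (n-1)) := by
    rcases n with _|m
    · simp
    · simpa [Nat.mul_comm] using Nat.even_mul_succ_self m
  obtain ⟨r, hr⟩ := hev
  have hnn : n ≤ n * n := by nlinarith
  generalize hNN : n * n = NN at e1 hc hnn
  generalize hN : n * (n-1) = N at e1 hk hℓ hr
  omega

theorem bwd (n ℓ k : ℕ) (hℓ1 : 1 ≤ ℓ) (hℓ : ℓ ≤ n * (n - 1) / 2)
    (hk : k = n * (n - 1) / 2 - ℓ) (G : SimpleGraph (Fin n)) [DecidableRel G.Adj]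
    (ρ' : (Fin (k + 1) ⊕ Fin n) → (Fin (k + 1) ⊕ Fin n) → ℝ)
    (hcount : {p : (Fin (k + 1) ⊕ Fin n) × (Fin (k + 1) ⊕ Fin n) |
            p.1 ≠ p.2 ∧ ρ' p.1 p.2 ≠ rhoMC k G p.1 p.2}.ncard ≤ 2 * k)
    (hemb : IsEmbeddable Finset.univ ρ' 1) :
    ∃ A : Finset (Fin n),
        ℓ ≤ {p : Fin n × Fin n | G.Adj p.1 p.2 ∧ p.1 ∈ A ∧ p.2 ∉ A}.ncard := by
  classical
  obtain ⟨φ, hφ⟩ := hemb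
  set f : (Fin (k+1) ⊕ Fin n) → ℝ := fun x => φ x 0 with hfdef
  have hρ : ∀ x y, ρ' x y = |f x - f y| := fun x y => by
    rw [hφ x (Finset.mem_univ x) y (Finset.mem_univ y), dist_euclid_one]
  set c : ℝ := f (Sum.inl 0) with hcdef
  rw [ncard_filter'] at hcount
  set Dfin := univ.filter (fun p : (Fin (k+1) ⊕ Fin n) × (Fin (k+1) ⊕ Fin n) =>
    p.1 ≠ p.2 ∧ ρ' p.1 p.2 ≠ rhoMC k G p.1 p.2) with hDfin
  -- Step 1: every x-point lies at distance exactly one from c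
  have hgood : ∀ j : Fin n, f (Sum.inr j) = c + 1 ∨ f (Sum.inr j) = c - 1 := by
    by_contra hbad
    push_neg at hbad
    obtain ⟨j₀, hj1, hj2⟩ := hbad
    set S := univ.filter (fun a : Fin (k+1) => f (Sum.inl a) = c) with hSdef
    set S' := univ.filter (fun a : Fin (k+1) => ¬ f (Sum.inl a) = c) with hS'def
    have hsu : S.card + S'.card = k + 1 := by
      rw [hSdef, hS'def, Finset.card_filter_add_card_filter_not]
      simp
    have hs1 : 1 ≤ S.card := by
      refine Finset.card_pos.mpr ⟨0, ?_⟩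
      simp [hSdef, hcdef]
    set inlm : Fin (k+1) → (Fin (k+1) ⊕ Fin n) := Sum.inl with hinlm
    set P1 := (S.image inlm) ×ˢ (S'.image inlm) with hP1
    set P2 := (S'.image inlm) ×ˢ (S.image inlm) with hP2
    set B1 := (S.image inlm) ×ˢ ({Sum.inr j₀} : Finset (Fin (k+1) ⊕ Fin n)) with hB1
    set B2 := ({Sum.inr j₀} : Finset (Fin (k+1) ⊕ Fin n)) ×ˢ (S.image inlm) with hB2
    have memS : ∀ x ∈ S.image inlm, ∃ a, x = Sum.inl a ∧ f (Sum.inl a) = c := by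
      intro x hx
      simp only [hinlm, Finset.mem_image, hSdef, mem_filter, mem_univ, true_and] at hx
      obtain ⟨a, ha, rfl⟩ := hx
      exact ⟨a, rfl, ha⟩
    have memS' : ∀ x ∈ S'.image inlm, ∃ a, x = Sum.inl a ∧ f (Sum.inl a) ≠ c := by
      intro x hx
      simp only [hinlm, Finset.mem_image, hS'def, mem_filter, mem_univ, true_and] at hx
      obtain ⟨a, ha, rfl⟩ := hx
      exact ⟨a, rfl, ha⟩
    have hsubD : ((P1 ∪ B1) ∪ (P2 ∪ B2)) ⊆ Dfin := by
      rintro ⟨x, y⟩ hp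
      simp only [Finset.mem_union] at hp
      simp only [hDfin, mem_filter, mem_univ, true_and]
      rcases hp with (hp | hp) | (hp | hp)
      · rw [hP1, Finset.mem_product] at hp
        obtain ⟨a, rfl, ha⟩ := memS x hp.1
        obtain ⟨b, rfl, hb⟩ := memS' y hp.2
        constructor
        · intro h; rw [h] at ha; exact hb ha
        · rw [hρ, ha]
          intro h
          exact hb (by have := abs_eq_zero.mp h; linarith)
      · rw [hB1, Finset.mem_product, Finset.mem_singleton] at hp
        obtain ⟨a, rfl, ha⟩ := memS x hp.1
        obtain rfl : y = Sum.inr j₀ := hp.2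
        refine ⟨by simp, ?_⟩
        rw [hρ, ha]
        show ¬ _ = (1:ℝ)
        intro h
        rcases (abs_eq (by norm_num : (0:ℝ) ≤ 1)).mp h with h' | h'
        · exact hj2 (by linarith)
        · exact hj1 (by linarith)
      · rw [hP2, Finset.mem_product] at hp
        obtain ⟨a, rfl, ha⟩ := memS' x hp.1
        obtain ⟨b, rfl, hb⟩ := memS y hp.2
        constructor
        · intro h; rw [h] at ha; exact ha hb
        · rw [hρ, hb]
          intro h
          exact ha (by have := abs_eq_zero.mp h; linarith)
      · rw [hB2, Finset.mem_product, Finset.mem_singleton] at hp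
        obtain ⟨b, rfl, hb⟩ := memS y hp.2
        obtain rfl : x = Sum.inr j₀ := hp.1
        refine ⟨by simp, ?_⟩
        rw [hρ, hb]
        show ¬ _ = (1:ℝ)
        intro h
        rcases (abs_eq (by norm_num : (0:ℝ) ≤ 1)).mp h with h' | h'
        · exact hj1 (by linarith)
        · exact hj2 (by linarith)
    -- disjointness
    have hd1 : Disjoint P1 B1 := by
      rw [Finset.disjoint_left]
      intro p hp hq
      rw [hP1, Finset.mem_product] at hp
      rw [hB1, Finset.mem_product, Finset.mem_singleton] at hq
      obtain ⟨b, hb, -⟩ := memS' _ hp.2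
      rw [hq.2] at hb
      exact nomatch hb
    have hd2 : Disjoint P2 B2 := by
      rw [Finset.disjoint_left]
      intro p hp hq
      rw [hP2, Finset.mem_product] at hp
      rw [hB2, Finset.mem_product, Finset.mem_singleton] at hq
      obtain ⟨b, hb, -⟩ := memS' _ hp.1
      rw [hq.1] at hb
      exact nomatch hb
    have hd3 : Disjoint (P1 ∪ B1) (P2 ∪ B2) := by
      rw [Finset.disjoint_left]
      intro p hp hq
      have hp1 : ∃ a, p.1 = Sum.inl a ∧ f (Sum.inl a) = c := by
        rcases Finset.mem_union.mp hp with hp | hp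
        · rw [hP1, Finset.mem_product] at hp; exact memS _ hp.1
        · rw [hB1, Finset.mem_product] at hp; exact memS _ hp.1
      obtain ⟨a, ha, hac⟩ := hp1
      rcases Finset.mem_union.mp hq with hq | hq
      · rw [hP2, Finset.mem_product] at hq
        obtain ⟨b, hb, hbc⟩ := memS' _ hq.1
        rw [ha] at hb
        obtain rfl : a = b := Sum.inl.inj hb
        exact hbc hac
      · rw [hB2, Finset.mem_product, Finset.mem_singleton] at hq
        rw [hq.1] at ha
        exact nomatch ha
    have hcards : P1.card + B1.card + (P2.card + B2.card) ≤ 2 * k := by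
      have h1 := Finset.card_union_of_disjoint hd1
      have h2 := Finset.card_union_of_disjoint hd2
      have h3 := Finset.card_union_of_disjoint hd3
      have h4 := Finset.card_le_card hsubD
      rw [h3, h1, h2] at h4
      exact h4.trans hcount
    have hinj : Function.Injective inlm := fun a b h => Sum.inl.inj h
    have hcP1 : P1.card = S.card * S'.card := by
      rw [hP1, Finset.card_product, Finset.card_image_of_injective _ hinj,
        Finset.card_image_of_injective _ hinj]
    have hcP2 : P2.card = S'.card * S.card := by
      rw [hP2, Finset.card_product, Finset.card_image_of_injective _ hinj,
        Finset.card_image_of_injective _ hinj]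
    have hcB1 : B1.card = S.card := by
      rw [hB1, Finset.card_product, Finset.card_image_of_injective _ hinj]
      simp
    have hcB2 : B2.card = S.card := by
      rw [hB2, Finset.card_product, Finset.card_image_of_injective _ hinj]
      simp
    rw [hcP1, hcP2, hcB1, hcB2, Nat.mul_comm (S'.card)] at hcards
    have hle : S'.card ≤ S.card * S'.card := Nat.le_mul_of_pos_left _ hs1
    generalize S.card * S'.card = M at hcards hle
    omega
  -- Step 2: build the cut
  set A := univ.filter (fun j : Fin n => f (Sum.inr j) = c + 1) with hAdef
  refine ⟨A, ?_⟩
  rw [ncard_filter']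
  set cutF := univ.filter (fun p : Fin n × Fin n => G.Adj p.1 p.2 ∧ p.1 ∈ A ∧ p.2 ∉ A) with hcutF
  set cut2 := univ.filter (fun p : Fin n × Fin n => G.Adj p.1 p.2 ∧ p.2 ∈ A ∧ p.1 ∉ A) with hcut2
  set Mx := univ.filter (fun p : Fin n × Fin n => p.1 ≠ p.2 ∧
    ρ' (Sum.inr p.1) (Sum.inr p.2) ≠ rhoMC k G (Sum.inr p.1) (Sum.inr p.2)) with hMxdef
  have hMD : Mx.card ≤ 2 * k := by
    have hsub : Mx.map ⟨fun p => (Sum.inr p.1, Sum.inr p.2), by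
        intro p q h
        simpa [Prod.ext_iff] using h⟩ ⊆ Dfin := by
      intro p hp
      rw [Finset.mem_map] at hp
      obtain ⟨q, hq, rfl⟩ := hp
      rw [hMxdef, mem_filter] at hq
      rw [hDfin, mem_filter]
      refine ⟨mem_univ _, ?_, hq.2.2⟩
      intro h
      exact hq.2.1 (Sum.inr.inj h)
    have := (Finset.card_le_card hsub).trans hcount
    rwa [Finset.card_map] at this
  have hmemA : ∀ j : Fin n, j ∈ A ↔ f (Sum.inr j) = c + 1 := by
    intro j; simp [hAdef]
  have hsplit : univ.filter (fun p : Fin n × Fin n => p.1 ≠ p.2) ⊆ (Mx ∪ cutF) ∪ cut2 := by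
    intro p hp
    rw [mem_filter] at hp
    have hij : p.1 ≠ p.2 := hp.2
    by_cases hm : p ∈ Mx
    · exact Finset.mem_union_left _ (Finset.mem_union_left _ hm)
    have hun : ρ' (Sum.inr p.1) (Sum.inr p.2) = rhoMC k G (Sum.inr p.1) (Sum.inr p.2) := by
      by_contra h
      exact hm (by rw [hMxdef, mem_filter]; exact ⟨mem_univ _, hij, h⟩)
    rw [hρ] at hun
    rcases hgood p.1 with h1 | h1 <;> rcases hgood p.2 with h2 | h2
    · exfalso
      rw [h1, h2, sub_self, abs_zero] at hun
      by_cases hadj : G.Adj p.1 p.2 <;> simp [rhoMC, hij, hadj] at hun <;> norm_num at hun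
    · -- p.1 at c+1, p.2 at c-1 : distance 2, must be an edge, and p ∈ cutF
      have hd2 : |f (Sum.inr p.1) - f (Sum.inr p.2)| = 2 := by
        rw [h1, h2, show c + 1 - (c - 1) = (2:ℝ) by ring]
        norm_num
      rw [hd2] at hun
      have hadj : G.Adj p.1 p.2 := by
        by_contra hadj
        simp [rhoMC, hij, hadj] at hun
      refine Finset.mem_union_left _ (Finset.mem_union_right _ ?_)
      rw [hcutF, mem_filter]
      refine ⟨mem_univ _, hadj, (hmemA _).mpr h1, ?_⟩
      rw [hmemA, h2]
      intro h
      linarith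
    · -- p.1 at c-1, p.2 at c+1 : cut2
      have hd2 : |f (Sum.inr p.1) - f (Sum.inr p.2)| = 2 := by
        rw [h1, h2, show c - 1 - (c + 1) = (-2:ℝ) by ring]
        norm_num
      rw [hd2] at hun
      have hadj : G.Adj p.1 p.2 := by
        by_contra hadj
        simp [rhoMC, hij, hadj] at hun
      refine Finset.mem_union_right _ ?_
      rw [hcut2, mem_filter]
      refine ⟨mem_univ _, hadj, (hmemA _).mpr h2, ?_⟩
      rw [hmemA, h1]
      intro h
      linarith
    · exfalso
      rw [h1, h2, sub_self, abs_zero] at hun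
      by_cases hadj : G.Adj p.1 p.2 <;> simp [rhoMC, hij, hadj] at hun <;> norm_num at hun
  have hswap : cut2.card = cutF.card := by
    apply Finset.card_bij (fun p _ => Prod.swap p)
    · intro p hp
      rw [hcut2, mem_filter] at hp
      rw [hcutF, mem_filter]
      exact ⟨mem_univ _, hp.2.1.symm, hp.2.2.1, hp.2.2.2⟩
    · intro p _ q _ h
      exact Prod.swap_injective h
    · intro p hp
      refine ⟨p.swap, ?_, by simp⟩
      rw [hcutF, mem_filter] at hp
      rw [hcut2, mem_filter]
      exact ⟨mem_univ _, hp.2.1.symm, hp.2.2.1, hp.2.2.2⟩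
  have hoff : (univ.filter (fun p : Fin n × Fin n => p.1 ≠ p.2)).card = n*n - n := by
    rw [show (univ.filter (fun p : Fin n × Fin n => p.1 ≠ p.2)) = (univ : Finset (Fin n)).offDiag
      from by ext p; simp [Finset.mem_offDiag], Finset.offDiag_card]
    simp
  have hmain : n*n - n ≤ Mx.card + cutF.card + cut2.card := by
    have ha1 := Finset.card_le_card hsplit
    have ha2 := Finset.card_union_le (Mx ∪ cutF) cut2
    have ha3 := Finset.card_union_le Mx cutF
    rw [hoff] at ha1
    omega
  rw [hswap] at hmain
  have e1 : n * (n-1) = n*n - n := by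
    rcases n with _|m
    · rfl
    · rw [Nat.succ_sub_one, Nat.mul_succ, Nat.add_sub_cancel]
  have hev : Even (n * (n-1)) := by
    rcases n with _|m
    · simp
    · simpa [Nat.mul_comm] using Nat.even_mul_succ_self m
  obtain ⟨r, hr⟩ := hev
  have hnn : n ≤ n * n := by nlinarith
  generalize hNN : n * n = NN at e1 hmain hnn
  generalize hN : n * (n-1) = N at e1 hk hℓ hr
  omega

/-- `G` has a cut of size at least `ℓ` iff `rhoMC` can be made
`1`-embeddable by modifying at most `k = n(n-1)/2 - ℓ` distances between unordered
pairs of distinct points (counted as at most `2k` ordered pairs). -/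
theorem stmt12 (n ℓ k : ℕ) (hℓ1 : 1 ≤ ℓ) (hℓ : ℓ ≤ n * (n - 1) / 2)
    (hk : k = n * (n - 1) / 2 - ℓ) (G : SimpleGraph (Fin n)) [DecidableRel G.Adj] :
    (∃ A : Finset (Fin n),
        ℓ ≤ {p : Fin n × Fin n | G.Adj p.1 p.2 ∧ p.1 ∈ A ∧ p.2 ∉ A}.ncard) ↔
      ∃ ρ' : (Fin (k + 1) ⊕ Fin n) → (Fin (k + 1) ⊕ Fin n) → ℝ,
        (∀ x y, ρ' x y = ρ' y x) ∧ (∀ x y, 0 ≤ ρ' x y) ∧ (∀ x, ρ' x x = 0) ∧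
        {p : (Fin (k + 1) ⊕ Fin n) × (Fin (k + 1) ⊕ Fin n) |
            p.1 ≠ p.2 ∧ ρ' p.1 p.2 ≠ rhoMC k G p.1 p.2}.ncard ≤ 2 * k ∧
        IsEmbeddable Finset.univ ρ' 1 := by
  constructor
  · rintro ⟨A, hA⟩
    exact fwd n ℓ k hℓ1 hℓ hk G A hA
  · rintro ⟨ρ', hsym, hnn, hdiag, hcount, hemb⟩
    exact bwd n ℓ k hℓ1 hℓ hk G ρ' hcount hemb
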